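/- Let Ψ₁ be a real symmetric positive definite L×L matrix and set Ψ₂ := (Ψ₁^{-1} + I_L)^{-1}. Then the matrix Diag(diag(Ψ₁Ψ₂)) − Ψ₁⊙Ψ₂ is positive semidefinite; equivalently, the Hadamard product Ψ₁⊙Ψ₂ is dominated in the Loewner order by the diagonal matrix whose diagonal is that of the product Ψ₁Ψ₂. -/

import Mathlib

open Matrix

/-- for a real symmetric positive definite `Ψ₁` and
`Ψ₂ := (Ψ₁⁻¹ + I)⁻¹`, the matrix `Diag(diag(Ψ₁Ψ₂)) − Ψ₁⊙Ψ₂` is positive semidefinite;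
i.e. the Hadamard product `Ψ₁⊙Ψ₂` is dominated in the Loewner order by the diagonal
matrix whose diagonal is that of `Ψ₁Ψ₂`. -/
theorem stmt10 {L : ℕ} (hL : 0 < L)
    (Ψ₁ : Matrix (Fin L) (Fin L) ℝ) (hΨ₁ : Ψ₁.PosDef)
    (Ψ₂ : Matrix (Fin L) (Fin L) ℝ)
    (hΨ₂ : Ψ₂ = (Ψ₁⁻¹ + 1)⁻¹) :
    (Matrix.diagonal (Matrix.diag (Ψ₁ * Ψ₂)) - Matrix.hadamard Ψ₁ Ψ₂).PosSemidef := by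
  -- basic notation
  set B : Matrix (Fin L) (Fin L) ℝ := 1 + Ψ₁ with hB
  have hBpd : B.PosDef := Matrix.PosDef.add Matrix.PosDef.one hΨ₁
  have hdet1 : IsUnit Ψ₁.det := hΨ₁.det_pos.ne'.isUnit
  have hdetB : IsUnit B.det := hBpd.det_pos.ne'.isUnit
  have hPB : B⁻¹ * B = 1 := Matrix.nonsing_inv_mul _ hdetB
  have hBP : B * B⁻¹ = 1 := Matrix.mul_nonsing_inv _ hdetB
  set P : Matrix (Fin L) (Fin L) ℝ := B⁻¹ with hPdef
  have hPpd : P.PosDef := hBpd.inv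
  -- Ψ₂ as P * Ψ₁
  have hfact : Ψ₁⁻¹ + 1 = Ψ₁⁻¹ * B := by
    rw [hB, Matrix.mul_add, Matrix.mul_one, Matrix.nonsing_inv_mul _ hdet1, add_comm]
  have hΨ₂eq : Ψ₂ = P * Ψ₁ := by
    rw [hΨ₂, hfact, Matrix.mul_inv_rev, Matrix.nonsing_inv_nonsing_inv _ hdet1]
  -- Ψ₂ is positive definite
  have hΨ₂pd : Ψ₂.PosDef := by
    rw [hΨ₂]
    exact (Matrix.PosDef.add hΨ₁.inv Matrix.PosDef.one).inv
  -- Ψ₂ = 1 - P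
  have hΨ₂eq' : Ψ₂ = 1 - P := by
    have h1 : P * B - P = P * Ψ₁ := by
      rw [hB, Matrix.mul_add, Matrix.mul_one, add_sub_cancel_left]
    rw [hΨ₂eq, ← h1, hPB]
  -- Ψ₁ commutes with B and with P
  have hcommB : B * Ψ₁ = Ψ₁ * B := by
    rw [hB, add_mul, mul_add, one_mul, mul_one]
  have hcommP : Ψ₁ * P = P * Ψ₁ := by
    calc Ψ₁ * P = (P * B) * Ψ₁ * P := by rw [hPB, one_mul]
      _ = P * (B * Ψ₁) * P := by rw [Matrix.mul_assoc P B Ψ₁]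
      _ = P * Ψ₁ * (B * P) := by rw [hcommB, Matrix.mul_assoc, Matrix.mul_assoc, Matrix.mul_assoc]
      _ = P * Ψ₁ := by rw [hBP, Matrix.mul_one]
  -- Ψ₁ and Ψ₂ commute
  have hcomm12 : Ψ₂ * Ψ₁ = Ψ₁ * Ψ₂ := by
    rw [hΨ₂eq, ← Matrix.mul_assoc Ψ₁ P Ψ₁, hcommP, Matrix.mul_assoc]
  -- symmetry facts
  have h1sym : Ψ₁ᵀ = Ψ₁ := by
    rw [← Matrix.conjTranspose_eq_transpose_of_trivial]; exact hΨ₁.isHermitian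
  have h2sym : Ψ₂ᵀ = Ψ₂ := by
    rw [← Matrix.conjTranspose_eq_transpose_of_trivial]; exact hΨ₂pd.isHermitian
  rw [Matrix.posSemidef_iff_dotProduct_mulVec]
  constructor
  · -- Hermitian part
    rw [Matrix.IsHermitian, Matrix.conjTranspose_eq_transpose_of_trivial]
    ext i j
    simp only [Matrix.transpose_apply, Matrix.sub_apply, Matrix.hadamard_apply,
      Matrix.diagonal_apply]
    have e1 : Ψ₁ j i = Ψ₁ i j := by conv_lhs => rw [← h1sym, Matrix.transpose_apply]
    have e2 : Ψ₂ j i = Ψ₂ i j := by conv_lhs => rw [← h2sym, Matrix.transpose_apply]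
    rw [e1, e2]
    by_cases h : i = j
    · subst h; simp
    · rw [if_neg h, if_neg (Ne.symm h)]
  · -- quadratic form part
    intro x
    have hstar : star x = x := by funext i; simp
    rw [hstar]
    set D : Matrix (Fin L) (Fin L) ℝ := Matrix.diagonal x with hD
    set K : Matrix (Fin L) (Fin L) ℝ := Ψ₁ * D - D * Ψ₁ with hK
    have hPsd : P.PosSemidef := hPpd.posSemidef
    obtain ⟨Q, hQsym, hQQ⟩ : ∃ Q : Matrix (Fin L) (Fin L) ℝ, Qᵀ = Q ∧ Q * Q = P := by
      open scoped MatrixOrder in refine ⟨CFC.sqrt P, ?_, CFC.sqrt_mul_sqrt_self P hPsd.nonneg⟩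
      rw [← Matrix.conjTranspose_eq_transpose_of_trivial]
      open scoped MatrixOrder in exact (CFC.sqrt_nonneg P).posSemidef.isHermitian
    have hDsym : Dᵀ = D := Matrix.diagonal_transpose x
    -- commutator identity: Ψ₂ * D - D * Ψ₂ = P * K * P
    have hcommK : Ψ₂ * D - D * Ψ₂ = P * K * P := by
      have hDP : D * P = P * (D + Ψ₁ * D) * P := by
        calc D * P = (P * B) * D * P := by rw [hPB, one_mul]
          _ = P * (B * D) * P := by rw [Matrix.mul_assoc P B D]
          _ = P * (D + Ψ₁ * D) * P := by rw [hB, add_mul, one_mul]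
      have hPD : P * D = P * (D + D * Ψ₁) * P := by
        calc P * D = P * D * (B * P) := by rw [hBP, Matrix.mul_one]
          _ = P * (D * B) * P := by
              rw [Matrix.mul_assoc, Matrix.mul_assoc, Matrix.mul_assoc]
          _ = P * (D + D * Ψ₁) * P := by rw [hB, mul_add, mul_one]
      rw [hΨ₂eq', sub_mul, mul_sub, one_mul, mul_one, hK, sub_sub_sub_cancel_left, hDP, hPD]
      noncomm_ring
    -- Kᵀ = -K
    have hKT : Kᵀ = -K := by
      rw [hK, Matrix.transpose_sub, Matrix.transpose_mul, Matrix.transpose_mul, h1sym, hDsym]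
      abel
    -- trace identities
    set N : Matrix (Fin L) (Fin L) ℝ := Q * K * Q with hN
    have htr1 : Matrix.trace (Nᵀ * N) = Matrix.trace (Kᵀ * (P * K * P)) := by
      rw [hN, Matrix.transpose_mul, Matrix.transpose_mul, hQsym]
      calc Matrix.trace (Q * (Kᵀ * Q) * (Q * K * Q))
          = Matrix.trace (Q * ((Kᵀ * Q) * (Q * K * Q))) := by
            rw [Matrix.mul_assoc]
        _ = Matrix.trace ((Kᵀ * Q) * (Q * K * Q) * Q) := by
            rw [Matrix.trace_mul_comm, Matrix.mul_assoc]
        _ = Matrix.trace (Kᵀ * (P * K * P)) := by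
            congr 1
            rw [← hQQ]
            noncomm_ring
    have t1 : Matrix.trace (Ψ₁ * D * (Ψ₂ * D)) = Matrix.trace (D * Ψ₁ * (D * Ψ₂)) := by
      calc Matrix.trace (Ψ₁ * D * (Ψ₂ * D))
          = Matrix.trace (Ψ₁ * (D * Ψ₂) * D) := by congr 1; noncomm_ring
        _ = Matrix.trace (D * Ψ₁ * (D * Ψ₂)) := Matrix.trace_mul_cycle Ψ₁ (D * Ψ₂) D
    have t2 : Matrix.trace (Ψ₁ * D * (D * Ψ₂)) = Matrix.trace (D * D * (Ψ₁ * Ψ₂)) := by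
      calc Matrix.trace (Ψ₁ * D * (D * Ψ₂))
          = Matrix.trace ((Ψ₁ * (D * D)) * Ψ₂) := by congr 1; noncomm_ring
        _ = Matrix.trace (Ψ₂ * (Ψ₁ * (D * D))) := Matrix.trace_mul_comm _ _
        _ = Matrix.trace ((Ψ₂ * Ψ₁) * (D * D)) := by congr 1; noncomm_ring
        _ = Matrix.trace ((D * D) * (Ψ₂ * Ψ₁)) := Matrix.trace_mul_comm _ _
        _ = Matrix.trace (D * D * (Ψ₁ * Ψ₂)) := by rw [hcomm12]
    have t3 : Matrix.trace (D * Ψ₁ * (Ψ₂ * D)) = Matrix.trace (D * D * (Ψ₁ * Ψ₂)) := by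
      calc Matrix.trace (D * Ψ₁ * (Ψ₂ * D))
          = Matrix.trace ((D * (Ψ₁ * Ψ₂)) * D) := by congr 1; noncomm_ring
        _ = Matrix.trace (D * (D * (Ψ₁ * Ψ₂))) := Matrix.trace_mul_comm _ _
        _ = Matrix.trace (D * D * (Ψ₁ * Ψ₂)) := by congr 1; noncomm_ring
    have htr2 : Matrix.trace (Kᵀ * (P * K * P))
        = 2 * (Matrix.trace (D * D * (Ψ₁ * Ψ₂)) - Matrix.trace (D * Ψ₁ * (D * Ψ₂))) := by
      rw [hKT, ← hcommK, hK]
      rw [neg_mul, Matrix.trace_neg, sub_mul, mul_sub, mul_sub, Matrix.trace_sub,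
        Matrix.trace_sub, Matrix.trace_sub, t1, t2, t3]
      ring
    -- scalar identities
    have e1 : x ⬝ᵥ (Matrix.diagonal (Matrix.diag (Ψ₁ * Ψ₂)) *ᵥ x)
        = Matrix.trace (D * D * (Ψ₁ * Ψ₂)) := by
      have hDD : D * D * (Ψ₁ * Ψ₂) = Matrix.diagonal (fun i => x i * x i) * (Ψ₁ * Ψ₂) := by
        rw [hD, Matrix.diagonal_mul_diagonal]
      rw [hDD, Matrix.trace]
      simp only [dotProduct, Matrix.mulVec_diagonal, Matrix.diag_apply, Matrix.diagonal_mul]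
      exact Finset.sum_congr rfl fun i _ => by ring
    have e2 : x ⬝ᵥ (Matrix.hadamard Ψ₁ Ψ₂ *ᵥ x) = Matrix.trace (D * Ψ₁ * (D * Ψ₂)) := by
      rw [Matrix.trace]
      simp only [dotProduct, Matrix.mulVec, Matrix.hadamard_apply, Matrix.diag_apply]
      refine Finset.sum_congr rfl fun i _ => ?_
      rw [Matrix.mul_apply, Finset.mul_sum]
      refine Finset.sum_congr rfl fun j _ => ?_
      have e2' : Ψ₂ j i = Ψ₂ i j := by conv_lhs => rw [← h2sym, Matrix.transpose_apply]
      simp only [hD, Matrix.diagonal_mul]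
      rw [e2']
      ring
    -- final computation
    have hform : x ⬝ᵥ ((Matrix.diagonal (Matrix.diag (Ψ₁ * Ψ₂)) - Matrix.hadamard Ψ₁ Ψ₂) *ᵥ x)
        = Matrix.trace (D * D * (Ψ₁ * Ψ₂)) - Matrix.trace (D * Ψ₁ * (D * Ψ₂)) := by
      rw [Matrix.sub_mulVec, dotProduct_sub, e1, e2]
    have htrN : 0 ≤ Matrix.trace (Nᵀ * N) := by
      rw [Matrix.trace]
      refine Finset.sum_nonneg fun i _ => ?_
      rw [Matrix.diag_apply, Matrix.mul_apply]
      exact Finset.sum_nonneg fun j _ => by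
        rw [Matrix.transpose_apply]; exact mul_self_nonneg _
    rw [hform]
    rw [htr1, htr2] at htrN
    linarith
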